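/- Let P_s be the self-inverting permutation obtained from the bitonic permutation P_b = Z₀ ++ reverse(Z₁) of an n-bit key ω (n ≥ 1). Then the elements of P_s at indices 1, 2, ..., n are all greater than n. -/

import Mathlib

/-- Binary representation of `ω`, most significant bit first. -/
def binRep (ω : ℕ) : List Bool := (Nat.bits ω).reverse

/-- The extended binary `B*`: `n` ones, then the one's complement of `B`, then a zero. -/
def extBin (ω : ℕ) : List Bool :=
  List.replicate (binRep ω).length true ++ (binRep ω).map (!·) ++ [false]

/-- Ascending list of 1-indexed positions of bit `b` in the bit string `l`. -/
def posOf (l : List Bool) (b : Bool) : List ℕ :=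
  ((List.range l.length).filter (fun i => l.getD i false == b)).map (· + 1)

/-- `Z₀`: ascending positions of zeros in `B*`. -/
def Z0 (ω : ℕ) : List ℕ := posOf (extBin ω) false

/-- `Z₁`: ascending positions of ones in `B*`. -/
def Z1 (ω : ℕ) : List ℕ := posOf (extBin ω) true

/-- Bitonic permutation `P_b = Z₀ ++ reverse Z₁`. -/
def Pb (ω : ℕ) : List ℕ := Z0 ω ++ (Z1 ω).reverse

/-- The self-inverting permutation `P_s`: it pairs the elements of `P_b`
equidistant from its extremes, i.e. `P_s (b_{2n+2-i}) = b_i`. -/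
def Ps (ω : ℕ) (x : ℕ) : ℕ :=
  (Pb ω).getD ((Pb ω).length - 1 - (Pb ω).idxOf x) 0

namespace Stmt10Aux

open List

lemma mem_posOf {l : List Bool} {b : Bool} {x : ℕ} (h : x ∈ posOf l b) :
    1 ≤ x ∧ x ≤ l.length := by
  simp only [posOf, mem_map, mem_filter, mem_range] at h
  obtain ⟨a, ⟨ha, _⟩, rfl⟩ := h
  omega

lemma posOf_append (l1 l2 : List Bool) (b : Bool) :
    posOf (l1 ++ l2) b = posOf l1 b ++ (posOf l2 b).map (· + l1.length) := by
  unfold posOf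
  rw [length_append, List.range_add, filter_append, map_append]
  refine congrArg₂ _ ?_ ?_
  · refine congrArg _ (filter_congr fun i hi => ?_)
    rw [mem_range] at hi
    rw [getD_append _ _ _ _ hi]
  · rw [filter_map, map_map, map_map]
    rw [filter_congr (q := fun i => l2.getD i false == b) (fun i _ => ?_)]
    · refine List.map_congr_left fun x _ => ?_
      simp only [Function.comp_apply]
      omega
    · simp only [Function.comp_apply]
      rw [getD_append_right _ _ _ _ (Nat.le_add_right _ _)]
      congr 2
      omega

lemma posOf_replicate_true (n : ℕ) :
    posOf (List.replicate n true) true = (List.range n).map (· + 1) := by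
  unfold posOf
  rw [length_replicate]
  congr 1
  apply List.filter_eq_self.mpr
  intro a ha
  rw [mem_range] at ha
  rw [getD_eq_getElem _ _ (by simpa using ha), List.getElem_replicate]
  simp

lemma posOf_replicate_false (n : ℕ) :
    posOf (List.replicate n true) false = [] := by
  unfold posOf
  rw [length_replicate]
  rw [List.filter_eq_nil_iff.mpr, map_nil]
  intro a ha
  rw [mem_range] at ha
  rw [getD_eq_getElem _ _ (by simpa using ha), List.getElem_replicate]
  simp

lemma posOf_single_false_false : posOf [false] false = [1] := by decide

lemma posOf_single_false_true : posOf [false] true = [] := by decide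

lemma posOf_length_add (l : List Bool) :
    (posOf l true).length + (posOf l false).length = l.length := by
  unfold posOf
  rw [length_map, length_map]
  have h := List.length_eq_length_filter_add (l := List.range l.length)
    (fun i => l.getD i false == true)
  have heq : List.filter (fun i => l.getD i false == false) (List.range l.length)
      = List.filter (fun x => !(l.getD x false == true)) (List.range l.length) :=
    filter_congr (fun a _ => by cases hb : l.getD a false <;> simp [hb])
  rw [heq]
  rw [length_range] at h
  exact h.symm

lemma indexOf_rev_range (n i : ℕ) (hi1 : 1 ≤ i) (hin : i ≤ n) :
    (((List.range n).map (· + 1)).reverse).idxOf i = n - i := by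
  have hlen : (((List.range n).map (· + 1)).reverse).length = n := by simp
  have hni : n - i < (((List.range n).map (· + 1)).reverse).length := by omega
  have hget : (((List.range n).map (· + 1)).reverse)[n - i]'hni = i := by
    simp only [List.getElem_reverse, List.getElem_map, List.getElem_range,
      length_map, length_range]
    omega
  have hnd : (((List.range n).map (· + 1)).reverse).Nodup := by
    rw [List.nodup_reverse]
    exact (List.nodup_range (n := n)).map (by intro a b h; simpa using h)
  have h := List.Nodup.idxOf_getElem hnd (n - i) hni
  rw [hget] at h
  exact h

end Stmt10Aux

open List Stmt10Aux in
/-- The elements of `P_s` at indices `1,…,n` are all greater than `n`. -/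
theorem stmt10 (ω n : ℕ) (hω : 0 < ω) (hn : (binRep ω).length = n) (hn1 : 1 ≤ n) :
    ∀ i, 1 ≤ i → i ≤ n → n < Ps ω i := by
  intro i hi1 hin
  set C : List Bool := (binRep ω).map (!·) with hC
  have hClen : C.length = n := by simp [hC, hn]
  have hext : extBin ω = List.replicate n true ++ (C ++ [false]) := by
    rw [extBin, hn, List.append_assoc]
  set F := posOf C false with hF
  set T := posOf C true with hT
  have hZ0 : Z0 ω = (F ++ [1 + n]).map (· + n) := by
    rw [Z0, hext, posOf_append, posOf_replicate_false, posOf_append,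
      posOf_single_false_false, length_replicate, hClen]
    simp
    rfl
  have hZ1 : Z1 ω = (List.range n).map (· + 1) ++ T.map (· + n) := by
    rw [Z1, hext, posOf_append, posOf_replicate_true, posOf_append,
      posOf_single_false_true, length_replicate, hClen]
    simp
    rfl
  set Front : List ℕ := (F ++ [1 + n]).map (· + n) ++ (T.map (· + n)).reverse
    with hFrontDef
  set R : List ℕ := ((List.range n).map (· + 1)).reverse with hRdef
  have hPb : Pb ω = Front ++ R := by
    rw [Pb, hZ0, hZ1, List.reverse_append, hFrontDef, List.append_assoc]
  have hFT : T.length + F.length = n := by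
    have h := posOf_length_add C
    rw [hClen] at h
    rw [← hF, ← hT] at h
    exact h
  have hFrontLen : Front.length = n + 1 := by
    simp only [hFrontDef, length_append, length_map, length_reverse, length_singleton]
    omega
  have hRlen : R.length = n := by simp [hRdef]
  have hFront_gt : ∀ x ∈ Front, n < x := by
    intro x hx
    rw [hFrontDef, mem_append] at hx
    rcases hx with hx | hx
    · rw [mem_map] at hx
      obtain ⟨a, ha, rfl⟩ := hx
      rw [mem_append] at ha
      rcases ha with ha | ha
      · have := (mem_posOf ha).1
        omega
      · simp only [mem_singleton] at ha
        omega
    · rw [mem_reverse, mem_map] at hx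
      obtain ⟨a, ha, rfl⟩ := hx
      have := (mem_posOf ha).1
      omega
  have hiR : R.idxOf i = n - i := indexOf_rev_range n i hi1 hin
  have hInotFront : i ∉ Front := fun h => by
    have := hFront_gt i h
    omega
  have hIdx : (Pb ω).idxOf i = 2 * n + 1 - i := by
    rw [hPb, List.idxOf_append_of_notMem hInotFront, hiR, hFrontLen]
    omega
  have hPbLen : (Pb ω).length = 2 * n + 1 := by
    rw [hPb, length_append, hFrontLen, hRlen]
    omega
  have harg : (Pb ω).length - 1 - (Pb ω).idxOf i = i - 1 := by
    rw [hPbLen, hIdx]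
    omega
  rw [Ps, harg, hPb]
  have hlt : i - 1 < Front.length := by omega
  rw [getD_append _ _ _ _ hlt, getD_eq_getElem _ _ hlt]
  exact hFront_gt _ (List.getElem_mem hlt)
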